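/- Let k be a field, H a Hopf algebra over k with comultiplication Δ and antipode S, and V₁, V₂ left H-modules with action homomorphisms ρ₁ : H → End_k(V₁), ρ₂ : H → End_k(V₂). Consider the subspace Hom_k(V₁,V₂)_f of finite-rank k-linear operators L : V₁ → V₂. Then: (a) for each a ∈ H with Δ(a) = Σ a₍₁₎ ⊗ a₍₂₎, the formula a·L = Σ ρ₂(a₍₁₎) ∘ L ∘ ρ₁(S(a₍₂₎)) maps Hom_k(V₁,V₂)_f to itself and defines an H-module structure on Hom_k(V₁,V₂)_f under which the evaluation map Hom_k(V₁,V₂)_f ⊗ V₁ → V₂, L ⊗ v ↦ Lv, is a morphism of H-modules; (b) this H-module structure is unique: any H-module structure on Hom_k(V₁,V₂)_f (extending the given k-vector space structure) for which the evaluation map is a morphism of H-modules is given by the above formula. -/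

import Mathlib

open HopfAlgebra

variable {k H V₁ V₂ : Type*}

/-- The subspace of finite-rank `k`-linear operators `V₁ → V₂`. -/
def finRankHom (k V₁ V₂ : Type*) [Field k] [AddCommGroup V₁] [Module k V₁]
    [AddCommGroup V₂] [Module k V₂] : Submodule k (V₁ →ₗ[k] V₂) where
  carrier := {L | FiniteDimensional k (LinearMap.range L)}
  zero_mem' := by
    show FiniteDimensional k (LinearMap.range (0 : V₁ →ₗ[k] V₂))
    rw [LinearMap.range_zero]
    infer_instance
  add_mem' := by
    intro f g hf hg
    have : FiniteDimensional k (LinearMap.range f) := hf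
    have : FiniteDimensional k (LinearMap.range g) := hg
    have hle : LinearMap.range (f + g) ≤ LinearMap.range f ⊔ LinearMap.range g := by
      rintro x ⟨v, rfl⟩
      exact Submodule.mem_sup.2 ⟨f v, ⟨v, rfl⟩, g v, ⟨v, rfl⟩, rfl⟩
    exact Submodule.finiteDimensional_of_le hle
  smul_mem' := by
    intro c f hf
    have : FiniteDimensional k (LinearMap.range f) := hf
    have hle : LinearMap.range (c • f) ≤ LinearMap.range f := by
      rintro x ⟨v, rfl⟩
      exact ⟨c • v, by simp⟩
    exact Submodule.finiteDimensional_of_le hle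

section HopfGeneral
open TensorProduct
section HopfHelpers

variable {K A : Type*} [CommSemiring K] [Semiring A] [HopfAlgebra K A]
open HopfAlgebra Coalgebra TensorProduct


noncomputable def reprMul {ι κ : Type*} {x y : A} (rx : Coalgebra.Repr K x ι) (ry : Coalgebra.Repr K y κ) :
    Coalgebra.Repr K (x * y) (ι × κ) where
  index := rx.index ×ˢ ry.index
  left := fun p => rx.left p.1 * ry.left p.2
  right := fun p => rx.right p.1 * ry.right p.2
  eq := by
    rw [Bialgebra.comul_mul, ← rx.eq, ← ry.eq, Finset.sum_mul_sum, Finset.sum_product]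
    simp [Algebra.TensorProduct.tmul_mul_tmul]

theorem antipode_one' : antipode (R := K) (1 : A) = 1 := by
  have := mul_antipode_rTensor_comul_apply (R := K) (A := A) 1
  simpa [Algebra.TensorProduct.one_def] using this

theorem sum_counit_smul {ι : Type*} {a : A} (r : Coalgebra.Repr K a ι) :
    ∑ i ∈ r.index, counit (R := K) (r.left i) • r.right i = a := by
  have h := congrArg (TensorProduct.lid K A) (Coalgebra.sum_counit_tmul_eq (R := K) r)
  rw [map_sum] at h
  simp only [TensorProduct.lid_tmul, one_smul] at h
  exact h

theorem sum_smul_counit {ι : Type*} {a : A} (r : Coalgebra.Repr K a ι) :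
    ∑ i ∈ r.index, counit (R := K) (r.right i) • r.left i = a := by
  have h := congrArg (TensorProduct.rid K A) (Coalgebra.sum_tmul_counit_eq (R := K) r)
  rw [map_sum] at h
  simp only [TensorProduct.rid_tmul, one_smul] at h
  exact h

/-- `∑ (x₁ y₁) ⬝ (S y₂ S x₂) = ε(x) ε(y) • 1`. -/
theorem claim2 {ι κ : Type*} {x y : A} (rx : Coalgebra.Repr K x ι) (ry : Coalgebra.Repr K y κ) :
    ∑ p ∈ rx.index, ∑ q ∈ ry.index,
      (rx.left p * ry.left q) *
        (antipode (R := K) (ry.right q) * antipode (R := K) (rx.right p))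
      = (counit (R := K) x * counit (R := K) y) • (1 : A) := by
  have hy : ∀ w : A, ∑ q ∈ ry.index, ry.left q * (antipode (R := K) (ry.right q) * w)
      = counit (R := K) y • w := by
    intro w
    simp_rw [← mul_assoc]
    rw [← Finset.sum_mul, sum_mul_antipode_eq_smul ry, smul_mul_assoc, one_mul]
  calc ∑ p ∈ rx.index, ∑ q ∈ ry.index, (rx.left p * ry.left q) *
        (antipode (R := K) (ry.right q) * antipode (R := K) (rx.right p))
      = ∑ p ∈ rx.index, rx.left p * (counit (R := K) y • antipode (R := K) (rx.right p)) := by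
        refine Finset.sum_congr rfl fun p _ => ?_
        rw [← hy (antipode (R := K) (rx.right p)), Finset.mul_sum]
        simp_rw [mul_assoc]
    _ = counit (R := K) y • ∑ p ∈ rx.index, rx.left p * antipode (R := K) (rx.right p) := by
        rw [Finset.smul_sum]
        simp_rw [mul_smul_comm]
    _ = (counit (R := K) x * counit (R := K) y) • 1 := by
        rw [sum_mul_antipode_eq_smul rx, smul_smul, mul_comm]

noncomputable def psiBig (K A : Type*) [CommSemiring K] [Semiring A] [HopfAlgebra K A] :
    ((A ⊗[K] (A ⊗[K] A)) ⊗[K] (A ⊗[K] (A ⊗[K] A))) →ₗ[K] A :=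
  LinearMap.mul' K A ∘ₗ
    TensorProduct.map (antipode (R := K) ∘ₗ LinearMap.mul' K A)
      ((LinearMap.mul' K A ∘ₗ
        TensorProduct.map (LinearMap.mul' K A)
          (LinearMap.mul' K A ∘ₗ
            TensorProduct.map (antipode (R := K)) (antipode (R := K)) ∘ₗ
            (TensorProduct.comm K A A).toLinearMap)) ∘ₗ
        (TensorProduct.tensorTensorTensorComm K A A A A).toLinearMap) ∘ₗ
    (TensorProduct.tensorTensorTensorComm K A (A ⊗[K] A) A (A ⊗[K] A)).toLinearMap

@[simp] lemma psiBig_tmul (A₁ A₂ A₃ B₁ B₂ B₃ : A) :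
    psiBig K A ((A₁ ⊗ₜ (A₂ ⊗ₜ A₃)) ⊗ₜ (B₁ ⊗ₜ (B₂ ⊗ₜ B₃))) =
      antipode (R := K) (A₁ * B₁) * ((A₂ * B₂) *
        (antipode (R := K) B₃ * antipode (R := K) A₃)) := by
  simp [psiBig, TensorProduct.tensorTensorTensorComm_tmul]

lemma map2_sum_sum {M N P : Type*} [AddCommMonoid M] [AddCommMonoid N] [AddCommMonoid P]
    [Module K M] [Module K N] [Module K P] (g : M ⊗[K] N →ₗ[K] P)
    {ιA ιB : Type*} (sA : Finset ιA) (sB : Finset ιB) (fA : ιA → M) (fB : ιB → N) :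
    g ((∑ i ∈ sA, fA i) ⊗ₜ[K] (∑ j ∈ sB, fB j)) =
      ∑ i ∈ sA, ∑ j ∈ sB, g (fA i ⊗ₜ[K] fB j) := by
  rw [TensorProduct.sum_tmul, map_sum]
  exact Finset.sum_congr rfl fun i _ => by rw [TensorProduct.tmul_sum, map_sum]

theorem antipode_mul_rev (a b : A) :
    antipode (R := K) (a * b) = antipode (R := K) b * antipode (R := K) a := by
  classical
  set ra := Coalgebra.Repr.arbitrary K a with hra
  set rb := Coalgebra.Repr.arbitrary K b with hrb
  set raL : (i : A × A) → Coalgebra.Repr K (ra.left i) (A × A) :=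
    fun i => Coalgebra.Repr.arbitrary K (ra.left i) with hraL
  set raR : (i : A × A) → Coalgebra.Repr K (ra.right i) (A × A) :=
    fun i => Coalgebra.Repr.arbitrary K (ra.right i) with hraR
  set rbL : (j : A × A) → Coalgebra.Repr K (rb.left j) (A × A) :=
    fun j => Coalgebra.Repr.arbitrary K (rb.left j) with hrbL
  set rbR : (j : A × A) → Coalgebra.Repr K (rb.right j) (A × A) :=
    fun j => Coalgebra.Repr.arbitrary K (rb.right j) with hrbR
  have h1 : (∑ i ∈ ra.index, counit (R := K) (ra.right i) • ra.left i) *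
      (∑ j ∈ rb.index, counit (R := K) (rb.right j) • rb.left j) = a * b := by
    rw [sum_smul_counit, sum_smul_counit]
  calc antipode (R := K) (a * b)
      = ∑ i ∈ ra.index, ∑ j ∈ rb.index,
          (counit (R := K) (ra.right i) * counit (R := K) (rb.right j)) •
            antipode (R := K) (ra.left i * rb.left j) := by
        rw [← h1, Finset.sum_mul_sum, map_sum]
        refine Finset.sum_congr rfl fun i _ => ?_
        rw [map_sum]
        refine Finset.sum_congr rfl fun j _ => ?_
        rw [smul_mul_smul_comm, map_smul]
    _ = psiBig K A ((∑ i ∈ ra.index, ∑ p ∈ (raR i).index,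
          ra.left i ⊗ₜ[K] ((raR i).left p ⊗ₜ[K] (raR i).right p)) ⊗ₜ[K]
        (∑ j ∈ rb.index, ∑ q ∈ (rbR j).index,
          rb.left j ⊗ₜ[K] ((rbR j).left q ⊗ₜ[K] (rbR j).right q))) := by
        rw [map2_sum_sum (psiBig K A)]
        refine Finset.sum_congr rfl fun i _ => Finset.sum_congr rfl fun j _ => ?_
        rw [map2_sum_sum (psiBig K A)]
        simp only [psiBig_tmul]
        simp_rw [← Finset.mul_sum]
        rw [claim2 (raR i) (rbR j), mul_smul_comm, mul_one]
    _ = psiBig K A ((∑ i ∈ ra.index, ∑ p ∈ (raL i).index,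
          (raL i).left p ⊗ₜ[K] ((raL i).right p ⊗ₜ[K] ra.right i)) ⊗ₜ[K]
        (∑ j ∈ rb.index, ∑ q ∈ (rbL j).index,
          (rbL j).left q ⊗ₜ[K] ((rbL j).right q ⊗ₜ[K] rb.right j))) := by
        rw [Coalgebra.sum_tmul_tmul_eq ra raL raR, Coalgebra.sum_tmul_tmul_eq rb rbL rbR]
    _ = ∑ i ∈ ra.index, ∑ j ∈ rb.index,
          (counit (R := K) (ra.left i) * counit (R := K) (rb.left j)) •
            (antipode (R := K) (rb.right j) * antipode (R := K) (ra.right i)) := by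
        rw [map2_sum_sum (psiBig K A)]
        refine Finset.sum_congr rfl fun i _ => Finset.sum_congr rfl fun j _ => ?_
        rw [map2_sum_sum (psiBig K A)]
        simp only [psiBig_tmul]
        have regroup : ∀ p q,
            antipode (R := K) ((raL i).left p * (rbL j).left q) *
              (((raL i).right p * (rbL j).right q) *
                (antipode (R := K) (rb.right j) * antipode (R := K) (ra.right i))) =
            (antipode (R := K) ((reprMul (raL i) (rbL j)).left (p, q)) *
              (reprMul (raL i) (rbL j)).right (p, q)) *
              (antipode (R := K) (rb.right j) * antipode (R := K) (ra.right i)) :=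
          fun p q => (mul_assoc _ _ _).symm
        simp_rw [regroup, ← Finset.sum_mul]
        rw [← Finset.sum_product' (f := fun p q =>
          antipode (R := K) ((reprMul (raL i) (rbL j)).left (p, q)) *
            (reprMul (raL i) (rbL j)).right (p, q))]
        rw [show ((raL i).index ×ˢ (rbL j).index) = (reprMul (raL i) (rbL j)).index from rfl]
        simp only [Prod.mk.eta]
        have hh := congrArg
          (· * (antipode (R := K) (rb.right j) * antipode (R := K) (ra.right i)))
          (sum_antipode_mul_eq_smul (R := K) (reprMul (raL i) (rbL j)))
        simp only [smul_mul_assoc, one_mul] at hh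
        rw [Bialgebra.counit_mul] at hh
        exact hh
    _ = antipode (R := K) b * antipode (R := K) a := by
        have hSb : ∑ j ∈ rb.index,
            counit (R := K) (rb.left j) • antipode (R := K) (rb.right j)
            = antipode (R := K) b := by
          calc ∑ j ∈ rb.index, counit (R := K) (rb.left j) • antipode (R := K) (rb.right j)
              = antipode (R := K) (∑ j ∈ rb.index, counit (R := K) (rb.left j) • rb.right j) := by
                rw [map_sum]; simp_rw [map_smul]
            _ = antipode (R := K) b := by rw [_root_.sum_counit_smul rb]
        have hSa : ∑ i ∈ ra.index,
            counit (R := K) (ra.left i) • antipode (R := K) (ra.right i)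
            = antipode (R := K) a := by
          calc ∑ i ∈ ra.index, counit (R := K) (ra.left i) • antipode (R := K) (ra.right i)
              = antipode (R := K) (∑ i ∈ ra.index, counit (R := K) (ra.left i) • ra.right i) := by
                rw [map_sum]; simp_rw [map_smul]
            _ = antipode (R := K) a := by rw [_root_.sum_counit_smul ra]
        calc ∑ i ∈ ra.index, ∑ j ∈ rb.index,
              (counit (R := K) (ra.left i) * counit (R := K) (rb.left j)) •
                (antipode (R := K) (rb.right j) * antipode (R := K) (ra.right i))
            = ∑ i ∈ ra.index, (∑ j ∈ rb.index,
                counit (R := K) (rb.left j) • antipode (R := K) (rb.right j)) *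
                (counit (R := K) (ra.left i) • antipode (R := K) (ra.right i)) := by
              refine Finset.sum_congr rfl fun i _ => ?_
              rw [Finset.sum_mul]
              refine Finset.sum_congr rfl fun j _ => ?_
              rw [smul_mul_smul_comm, mul_comm (counit (R := K) (rb.left j))]
          _ = antipode (R := K) b * ∑ i ∈ ra.index,
                counit (R := K) (ra.left i) • antipode (R := K) (ra.right i) := by
              rw [← Finset.mul_sum]
              simp_rw [hSb]
          _ = antipode (R := K) b * antipode (R := K) a := by rw [hSa]

/-- Reindex a representation over `ULift (Fin n)`, to move it to any universe. -/
noncomputable def reprReindex {ι : Type*} {a : A} (r : Coalgebra.Repr K a ι) :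
    Coalgebra.Repr K a (ULift (Fin r.index.card)) where
  index := (Finset.univ : Finset (ULift (Fin r.index.card)))
  left := fun i => r.left (r.index.equivFin.symm (Equiv.ulift i) : _)
  right := fun i => r.right (r.index.equivFin.symm (Equiv.ulift i) : _)
  eq := by
    rw [← r.eq, ← Finset.sum_coe_sort r.index
      (fun x => r.left x ⊗ₜ[K] r.right x)]
    exact Fintype.sum_equiv (Equiv.ulift.trans r.index.equivFin.symm)
      _ _ (fun i => rfl)


end HopfHelpers
end HopfGeneral

section HomApp

open TensorProduct

variable (R : Type*) {V W : Type*} [CommSemiring R] [AddCommMonoid V] [AddCommMonoid W]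
  [Module R V] [Module R W]

/-- Evaluation `Hom(V,W) ⊗ V → W` as a linear map. -/
noncomputable def homApp : (V →ₗ[R] W) ⊗[R] V →ₗ[R] W :=
  TensorProduct.lift LinearMap.id

@[simp] lemma homApp_tmul (f : V →ₗ[R] W) (x : V) : homApp R (f ⊗ₜ[R] x) = f x := by
  simp [homApp]

end HomApp

section

variable [Field k] [Ring H] [HopfAlgebra k H] [AddCommGroup V₁] [Module k V₁]
  [AddCommGroup V₂] [Module k V₂]

/-- The bilinear map `H → H → End (Hom(V₁,V₂))` sending `b ⊗ c` to
`L ↦ ρ₂(b) ∘ L ∘ ρ₁(S(c))`. -/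
noncomputable def homActionAux (ρ₁ : H →ₐ[k] Module.End k V₁)
    (ρ₂ : H →ₐ[k] Module.End k V₂) :
    H →ₗ[k] H →ₗ[k] Module.End k (V₁ →ₗ[k] V₂) :=
  ((LinearMap.mul k (Module.End k (V₁ →ₗ[k] V₂))) ∘ₗ
      ((LinearMap.llcomp k V₁ V₂ V₂) ∘ₗ ρ₂.toLinearMap)).compl₂
    ((LinearMap.llcomp k V₁ V₁ V₂).flip ∘ₗ (ρ₁.toLinearMap ∘ₗ antipode (R := k)))

/-- The action of `a : H` on `Hom_k(V₁,V₂)`: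
`a·L = Σ ρ₂(a₍₁₎) ∘ L ∘ ρ₁(S(a₍₂₎))` where `Δ(a) = Σ a₍₁₎ ⊗ a₍₂₎`. -/
noncomputable def homAction (ρ₁ : H →ₐ[k] Module.End k V₁)
    (ρ₂ : H →ₐ[k] Module.End k V₂) (a : H) : Module.End k (V₁ →ₗ[k] V₂) :=
  TensorProduct.lift (homActionAux ρ₁ ρ₂) (Coalgebra.comul a)

open Coalgebra TensorProduct



lemma homActionAux_apply (ρ₁ : H →ₐ[k] Module.End k V₁) (ρ₂ : H →ₐ[k] Module.End k V₂)
    (b c : H) (L : V₁ →ₗ[k] V₂) :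
    homActionAux ρ₁ ρ₂ b c L = ρ₂ b ∘ₗ L ∘ₗ ρ₁ (antipode (R := k) c) := rfl

lemma homAction_repr (ρ₁ : H →ₐ[k] Module.End k V₁) (ρ₂ : H →ₐ[k] Module.End k V₂)
    {a : H} {ι : Type*} (r : Coalgebra.Repr k a ι) :
    homAction ρ₁ ρ₂ a = ∑ i ∈ r.index, homActionAux ρ₁ ρ₂ (r.left i) (r.right i) := by
  rw [homAction, ← r.eq, map_sum]
  exact Finset.sum_congr rfl fun i _ => TensorProduct.lift.tmul _ _

lemma homActionAux_mul (ρ₁ : H →ₐ[k] Module.End k V₁) (ρ₂ : H →ₐ[k] Module.End k V₂)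
    (x x' y y' : H) :
    homActionAux ρ₁ ρ₂ (x * x') (y * y') =
      homActionAux ρ₁ ρ₂ x y * homActionAux ρ₁ ρ₂ x' y' := by
  apply LinearMap.ext; intro L
  apply LinearMap.ext; intro v
  simp [homActionAux_apply, antipode_mul_rev, map_mul, Module.End.mul_apply]

/-- evaluation-style linear map for part (4). -/
noncomputable def xiEval (ρ₁ : H →ₐ[k] Module.End k V₁) (ρ₂ : H →ₐ[k] Module.End k V₂)
    (L : V₁ →ₗ[k] V₂) (v : V₁) : H ⊗[k] (H ⊗[k] H) →ₗ[k] V₂ :=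
  homApp k ∘ₗ TensorProduct.map ρ₂.toLinearMap
    (L ∘ₗ LinearMap.applyₗ v ∘ₗ ρ₁.toLinearMap ∘ₗ LinearMap.mul' k H ∘ₗ
      (antipode (R := k)).rTensor H)

@[simp] lemma xiEval_tmul (ρ₁ : H →ₐ[k] Module.End k V₁) (ρ₂ : H →ₐ[k] Module.End k V₂)
    (L : V₁ →ₗ[k] V₂) (v : V₁) (A₁ A₂ A₃ : H) :
    xiEval ρ₁ ρ₂ L v (A₁ ⊗ₜ[k] (A₂ ⊗ₜ[k] A₃)) =
      ρ₂ A₁ (L (ρ₁ (antipode (R := k) A₂ * A₃) v)) := by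
  simp [xiEval]

/-- evaluation-style linear map for part (5). -/
noncomputable def xiUniq (ρ₁ : H →ₐ[k] Module.End k V₁)
    (Φ : H →ₐ[k] Module.End k (finRankHom k V₁ V₂)) (L : finRankHom k V₁ V₂) (v : V₁) :
    H ⊗[k] (H ⊗[k] H) →ₗ[k] V₂ :=
  homApp k ∘ₗ TensorProduct.map
    ((finRankHom k V₁ V₂).subtype ∘ₗ LinearMap.applyₗ L ∘ₗ Φ.toLinearMap)
    (LinearMap.applyₗ v ∘ₗ ρ₁.toLinearMap ∘ₗ LinearMap.mul' k H ∘ₗ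
      (antipode (R := k)).lTensor H)

@[simp] lemma xiUniq_tmul (ρ₁ : H →ₐ[k] Module.End k V₁)
    (Φ : H →ₐ[k] Module.End k (finRankHom k V₁ V₂)) (L : finRankHom k V₁ V₂) (v : V₁)
    (A₁ A₂ A₃ : H) :
    xiUniq ρ₁ Φ L v (A₁ ⊗ₜ[k] (A₂ ⊗ₜ[k] A₃)) =
      (Φ A₁ L : V₁ →ₗ[k] V₂) (ρ₁ (A₂ * antipode (R := k) A₃) v) := by
  simp [xiUniq]



/-- (a) The formula `a·L = Σ ρ₂(a₍₁₎) ∘ L ∘ ρ₁(S(a₍₂₎))` preserves the subspace of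
finite-rank operators and defines an `H`-module structure on it under which the
evaluation map `L ⊗ v ↦ L v` is a morphism of `H`-modules; (b) it is the unique
such `H`-module structure. -/
theorem homAction_finiteRank_spec (ρ₁ : H →ₐ[k] Module.End k V₁)
    (ρ₂ : H →ₐ[k] Module.End k V₂) :
    -- (a) the formula preserves finite-rank operators …
    (∀ (a : H) (L : V₁ →ₗ[k] V₂), L ∈ finRankHom k V₁ V₂ →
      homAction ρ₁ ρ₂ a L ∈ finRankHom k V₁ V₂) ∧
    -- … and defines an `H`-module structure (a unital multiplicative action) …
    homAction ρ₁ ρ₂ (1 : H) = 1 ∧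
    (∀ a b : H, homAction ρ₁ ρ₂ (a * b) = homAction ρ₁ ρ₂ a * homAction ρ₁ ρ₂ b) ∧
    -- … under which the evaluation map `Hom_f ⊗ V₁ → V₂` is a morphism of `H`-modules:
    (∀ (a : H) {ι : Type*} (repr : Coalgebra.Repr k a ι) (L : V₁ →ₗ[k] V₂), L ∈ finRankHom k V₁ V₂ →
      ∀ v : V₁,
        ∑ i ∈ repr.index, homAction ρ₁ ρ₂ (repr.left i) L (ρ₁ (repr.right i) v) =
          ρ₂ a (L v)) ∧
    -- (b) uniqueness: any `H`-module structure on the finite-rank operators making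
    -- evaluation a morphism of `H`-modules is given by the same formula.
    (∀ Φ : H →ₐ[k] Module.End k (finRankHom k V₁ V₂),
      (∀ (a : H) {ι : Type*} (repr : Coalgebra.Repr k a ι) (L : finRankHom k V₁ V₂) (v : V₁),
        ∑ i ∈ repr.index, (Φ (repr.left i) L : V₁ →ₗ[k] V₂) (ρ₁ (repr.right i) v) =
          ρ₂ a ((L : V₁ →ₗ[k] V₂) v)) →
      ∀ (a : H) (L : finRankHom k V₁ V₂),
        (Φ a L : V₁ →ₗ[k] V₂) = homAction ρ₁ ρ₂ a (L : V₁ →ₗ[k] V₂)) := by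
  classical
  refine ⟨?part1, ?part2, ?part3, ?part4, ?part5⟩
  case part1 =>
    intro a L hL
    have hL' : FiniteDimensional k (LinearMap.range L) := hL
    rw [homAction_repr ρ₁ ρ₂ (Coalgebra.Repr.arbitrary k a), LinearMap.sum_apply]
    refine Submodule.sum_mem _ fun i _ => ?_
    rw [homActionAux_apply]
    show FiniteDimensional k (LinearMap.range _)
    have hle : LinearMap.range
        (ρ₂ ((Coalgebra.Repr.arbitrary k a).left i) ∘ₗ L ∘ₗ
          ρ₁ (antipode (R := k) ((Coalgebra.Repr.arbitrary k a).right i))) ≤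
        (LinearMap.range L).map (ρ₂ ((Coalgebra.Repr.arbitrary k a).left i)) := by
      rintro x ⟨w, rfl⟩
      exact ⟨L (ρ₁ (antipode (R := k) ((Coalgebra.Repr.arbitrary k a).right i)) w),
        ⟨_, rfl⟩, rfl⟩
    exact Submodule.finiteDimensional_of_le hle
  case part2 =>
    have h1 : homAction ρ₁ ρ₂ (1 : H) = homActionAux ρ₁ ρ₂ 1 1 := by
      rw [homAction, Bialgebra.comul_one, Algebra.TensorProduct.one_def,
        TensorProduct.lift.tmul]
    rw [h1]
    apply LinearMap.ext; intro L
    apply LinearMap.ext; intro v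
    simp [homActionAux_apply, antipode_one', map_one]
  case part3 =>
    intro a b
    have h0 : homAction ρ₁ ρ₂ (a * b) =
        ∑ p ∈ (Coalgebra.Repr.arbitrary k a).index ×ˢ (Coalgebra.Repr.arbitrary k b).index,
          homActionAux ρ₁ ρ₂
            ((Coalgebra.Repr.arbitrary k a).left p.1 * (Coalgebra.Repr.arbitrary k b).left p.2)
            ((Coalgebra.Repr.arbitrary k a).right p.1 *
              (Coalgebra.Repr.arbitrary k b).right p.2) :=
      homAction_repr ρ₁ ρ₂ (reprMul (Coalgebra.Repr.arbitrary k a)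
        (Coalgebra.Repr.arbitrary k b))
    rw [h0, Finset.sum_product, homAction_repr ρ₁ ρ₂ (Coalgebra.Repr.arbitrary k a),
      homAction_repr ρ₁ ρ₂ (Coalgebra.Repr.arbitrary k b), Finset.sum_mul_sum]
    exact Finset.sum_congr rfl fun i _ => Finset.sum_congr rfl fun j _ =>
      homActionAux_mul ρ₁ ρ₂ _ _ _ _
  case part4 =>
    intro a ι repr L _ v
    set raL : (i : ι) → Coalgebra.Repr k (repr.left i) (H × H) :=
      fun i => Coalgebra.Repr.arbitrary k (repr.left i) with hraL
    set raR : (i : ι) → Coalgebra.Repr k (repr.right i) (H × H) :=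
      fun i => Coalgebra.Repr.arbitrary k (repr.right i) with hraR
    calc ∑ i ∈ repr.index, homAction ρ₁ ρ₂ (repr.left i) L (ρ₁ (repr.right i) v)
        = xiEval ρ₁ ρ₂ L v (∑ i ∈ repr.index, ∑ p ∈ (raL i).index,
            (raL i).left p ⊗ₜ[k] ((raL i).right p ⊗ₜ[k] repr.right i)) := by
          rw [map_sum]
          refine Finset.sum_congr rfl fun i _ => ?_
          rw [map_sum, homAction_repr ρ₁ ρ₂ (raL i), LinearMap.sum_apply,
            LinearMap.sum_apply]
          refine Finset.sum_congr rfl fun p _ => ?_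
          rw [xiEval_tmul, homActionAux_apply]
          simp [Module.End.mul_apply, map_mul]
      _ = xiEval ρ₁ ρ₂ L v (∑ i ∈ repr.index, ∑ p ∈ (raR i).index,
            repr.left i ⊗ₜ[k] ((raR i).left p ⊗ₜ[k] (raR i).right p)) := by
          rw [Coalgebra.sum_tmul_tmul_eq repr raL raR]
      _ = ∑ i ∈ repr.index,
            counit (R := k) (repr.right i) • ρ₂ (repr.left i) (L v) := by
          rw [map_sum]
          refine Finset.sum_congr rfl fun i _ => ?_
          rw [map_sum]
          simp only [xiEval_tmul]
          have hsum : ∑ p ∈ (raR i).index,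
              ρ₁ (antipode (R := k) ((raR i).left p) * (raR i).right p) =
              counit (R := k) (repr.right i) • 1 := by
            rw [← map_sum, sum_antipode_mul_eq_smul (raR i), map_smul, map_one]
          calc ∑ p ∈ (raR i).index,
                ρ₂ (repr.left i) (L (ρ₁ (antipode (R := k) ((raR i).left p) *
                  (raR i).right p) v))
              = ρ₂ (repr.left i) (L ((∑ p ∈ (raR i).index,
                  ρ₁ (antipode (R := k) ((raR i).left p) * (raR i).right p)) v)) := by
                rw [LinearMap.sum_apply, map_sum, map_sum]
            _ = counit (R := k) (repr.right i) • ρ₂ (repr.left i) (L v) := by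
                rw [hsum]
                simp
      _ = ρ₂ a (L v) := by
          have h := congrArg (fun x : H => ρ₂ x (L v)) (sum_smul_counit repr)
          simpa [map_sum, map_smul] using h
  case part5 =>
    intro Φ hΦ a L
    apply LinearMap.ext; intro v
    set ra := Coalgebra.Repr.arbitrary k a with hra
    set raL := fun i : H × H => reprReindex (Coalgebra.Repr.arbitrary k (ra.left i)) with hraL
    set raR : (i : H × H) → Coalgebra.Repr k (ra.right i) (H × H) :=
      fun i => Coalgebra.Repr.arbitrary k (ra.right i) with hraR
    set ψ : H →ₗ[k] V₂ := LinearMap.applyₗ v ∘ₗ (finRankHom k V₁ V₂).subtype ∘ₗ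
      LinearMap.applyₗ L ∘ₗ Φ.toLinearMap with hψdef
    have hψ : ∀ x : H, ψ x = (Φ x L : V₁ →ₗ[k] V₂) v := fun x => rfl
    calc (Φ a L : V₁ →ₗ[k] V₂) v
        = xiUniq ρ₁ Φ L v (∑ i ∈ ra.index, ∑ p ∈ (raR i).index,
            ra.left i ⊗ₜ[k] ((raR i).left p ⊗ₜ[k] (raR i).right p)) := by
          rw [map_sum]
          have step : ∀ i ∈ ra.index,
              xiUniq ρ₁ Φ L v (∑ p ∈ (raR i).index,
                ra.left i ⊗ₜ[k] ((raR i).left p ⊗ₜ[k] (raR i).right p)) =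
              counit (R := k) (ra.right i) • (Φ (ra.left i) L : V₁ →ₗ[k] V₂) v := by
            intro i _
            rw [map_sum]
            simp only [xiUniq_tmul]
            have hsum : ∑ p ∈ (raR i).index,
                ρ₁ ((raR i).left p * antipode (R := k) ((raR i).right p)) =
                counit (R := k) (ra.right i) • 1 := by
              rw [← map_sum, sum_mul_antipode_eq_smul (raR i), map_smul, map_one]
            calc ∑ p ∈ (raR i).index,
                  (Φ (ra.left i) L : V₁ →ₗ[k] V₂)
                    (ρ₁ ((raR i).left p * antipode (R := k) ((raR i).right p)) v)
                = (Φ (ra.left i) L : V₁ →ₗ[k] V₂) ((∑ p ∈ (raR i).index,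
                    ρ₁ ((raR i).left p * antipode (R := k) ((raR i).right p))) v) := by
                  rw [LinearMap.sum_apply, map_sum]
              _ = counit (R := k) (ra.right i) • (Φ (ra.left i) L : V₁ →ₗ[k] V₂) v := by
                  rw [hsum]
                  simp
          rw [Finset.sum_congr rfl step]
          have hψ2 : ∑ i ∈ ra.index,
              counit (R := k) (ra.right i) • ψ (ra.left i) = ψ a := by
            simp_rw [← map_smul ψ]
            rw [← map_sum, sum_smul_counit ra]
          simp only [hψ] at hψ2
          exact hψ2.symm
      _ = xiUniq ρ₁ Φ L v (∑ i ∈ ra.index, ∑ p ∈ (raL i).index,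
            (raL i).left p ⊗ₜ[k] ((raL i).right p ⊗ₜ[k] ra.right i)) := by
          rw [Coalgebra.sum_tmul_tmul_eq ra raL raR]
      _ = ∑ i ∈ ra.index,
            ρ₂ (ra.left i) ((L : V₁ →ₗ[k] V₂) (ρ₁ (antipode (R := k) (ra.right i)) v)) := by
          rw [map_sum]
          refine Finset.sum_congr rfl fun i _ => ?_
          rw [map_sum]
          simp only [xiUniq_tmul]
          have hΦi := hΦ (ra.left i) (raL i) L (ρ₁ (antipode (R := k) (ra.right i)) v)
          rw [← hΦi]
          refine Finset.sum_congr rfl fun p _ => ?_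
          rw [map_mul]
          simp [Module.End.mul_apply]
      _ = homAction ρ₁ ρ₂ a (L : V₁ →ₗ[k] V₂) v := by
          rw [homAction_repr ρ₁ ρ₂ ra, LinearMap.sum_apply, LinearMap.sum_apply]
          refine Finset.sum_congr rfl fun i _ => ?_
          rw [homActionAux_apply]
          simp

end
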